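/- Let G be a finite simple graph of order n with r = χ(G), where n ≡ r − 1 (mod r), and suppose es_χ(G) = ⌊n/r⌋·⌊n/r + 1⌋. Then for every proper coloring of G with exactly r color classes C_1, …, C_r ordered so that |C_1| ≤ ⋯ ≤ |C_r|, every vertex v ∈ C_i and every index j ∈ {1, …, r} \ {i} satisfy e(v, C_j) ≥ ⌊n/r⌋, where e(v, C_j) is the number of edges from v to vertices of C_j. -/

import Mathlib

open Function

/-- The chromatic-stability index: the minimum number of edges whose removal
decreases the chromatic number (0 if no such edge set exists, e.g. for edgeless graphs). -/
noncomputable def esChi {V : Type*} [Fintype V] (G : SimpleGraph V) : ℕ :=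
  sInf {k | ∃ F : Finset (Sym2 V),
    ↑F ⊆ G.edgeSet ∧ F.card = k ∧
    (G.deleteEdges ↑F).chromaticNumber < G.chromaticNumber}

open scoped Classical in
/-- The color class of color `i` under the coloring `c`, as a `Finset`. -/
noncomputable def classOf {V : Type*} [Fintype V] {G : SimpleGraph V} {α : Type*}
    (c : G.Coloring α) (i : α) : Finset V :=
  Finset.univ.filter fun v => c v = i

open scoped Classical in
/-- The number of edges of `G` with one endpoint in `A` and the other in `B`
(for disjoint `A`, `B`). -/
noncomputable def eCC {V : Type*} [Fintype V] (G : SimpleGraph V) (A B : Finset V) : ℕ :=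
  ((A ×ˢ B).filter fun p => G.Adj p.1 p.2).card

/-- `c*`: the minimum size of a color class over all proper colorings of `G`
using exactly `χ(G)` colors. -/
noncomputable def cStar {V : Type*} [Fintype V] (G : SimpleGraph V) : ℕ :=
  sInf {k | ∃ (c : G.Coloring (Fin G.chromaticNumber.toNat))
      (i : Fin G.chromaticNumber.toNat),
    Surjective c ∧ k = (classOf c i).card}

/-- The chromatic bondage number: the minimum number of edges between two distinct
color classes, over all proper colorings of `G` using exactly `χ(G)` colors. -/
noncomputable def rhoChi {V : Type*} [Fintype V] (G : SimpleGraph V) : ℕ :=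
  sInf {k | ∃ (c : G.Coloring (Fin G.chromaticNumber.toNat))
      (i j : Fin G.chromaticNumber.toNat),
    Surjective c ∧ i ≠ j ∧ k = eCC G (classOf c i) (classOf c j)}

section Aux

variable {V : Type*} [Fintype V] {G : SimpleGraph V}

open scoped Classical

/-- Upper bound on `esChi` from a recoloring that misses a color. -/
lemma esChi_le_of_recolor (G : SimpleGraph V) (r : ℕ)
    (hchi : G.chromaticNumber = r) (f : V → Fin r) (i₀ : Fin r)
    (hmiss : ∀ u, f u ≠ i₀) (P : Finset (V × V))
    (hP : ∀ p ∈ P, G.Adj p.1 p.2)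
    (hcover : ∀ u w, G.Adj u w → f u = f w →
      Sym2.mk u w ∈ P.image fun p => Sym2.mk p.1 p.2) :
    esChi G ≤ P.card := by
  set F : Finset (Sym2 V) := P.image fun p => Sym2.mk p.1 p.2 with hF
  have hsub : ↑F ⊆ G.edgeSet := by
    intro e he
    simp only [hF, Finset.coe_image, Set.mem_image, Finset.mem_coe] at he
    obtain ⟨p, hp, rfl⟩ := he
    exact hP p hp
  have hcol : (G.deleteEdges ↑F).Colorable (r - 1) := by
    have hcard : Fintype.card {x : Fin r // x ≠ i₀} = r - 1 := by
      simp [Fintype.card_subtype_compl]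
    rw [← hcard]
    exact (SimpleGraph.Coloring.mk (fun u => (⟨f u, hmiss u⟩ : {x : Fin r // x ≠ i₀}))
      (by
        intro u w huw h
        rw [SimpleGraph.deleteEdges_adj] at huw
        exact huw.2 (hcover u w huw.1 (by simpa using congrArg Subtype.val h)))).colorable
  have hlt : (G.deleteEdges ↑F).chromaticNumber < G.chromaticNumber := by
    rw [hchi]
    refine lt_of_le_of_lt hcol.chromaticNumber_le ?_
    exact_mod_cast Nat.sub_lt (Fin.pos i₀) one_pos
  calc esChi G ≤ F.card := Nat.sInf_le ⟨F, hsub, rfl, hlt⟩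
    _ ≤ P.card := Finset.card_image_le

lemma mem_classOf {α : Type*} (c : G.Coloring α) (i : α) (v : V) :
    v ∈ classOf c i ↔ c v = i := by simp [classOf]

lemma sum_card_classOf {α : Type*} [Fintype α] (c : G.Coloring α) :
    ∑ k, (classOf c k).card = Fintype.card V := by
  rw [← Finset.card_univ,
    Finset.card_eq_sum_card_fiberwise (f := fun v => c v) (t := Finset.univ)
      (fun x _ => Finset.mem_univ _)]
  simp [classOf, Finset.filter_congr_decidable]

lemma eCC_le_mul (A B : Finset V) : eCC G A B ≤ A.card * B.card := by
  calc eCC G A B ≤ (A ×ˢ B).card := Finset.card_filter_le _ _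
    _ = A.card * B.card := Finset.card_product A B

lemma eCC_singleton (v : V) (B : Finset V) :
    eCC G {v} B = (B.filter fun w => G.Adj v w).card := by
  rw [eCC, Finset.singleton_product, Finset.filter_map, Finset.card_map]
  rfl

lemma eCC_eq_sum (A B : Finset V) :
    eCC G A B = ∑ u ∈ A, (B.filter fun w => G.Adj u w).card := by
  rw [eCC, Finset.card_eq_sum_card_fiberwise (f := Prod.fst) (t := A)
    (fun p hp => (Finset.mem_product.1 (Finset.mem_filter.1 hp).1).1)]
  refine Finset.sum_congr rfl fun u hu => ?_
  refine Finset.card_nbij (fun p => p.2) ?_ ?_ ?_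
  · rintro ⟨x, y⟩ hp
    simp only [Finset.mem_coe, Finset.mem_filter, Finset.mem_product] at hp ⊢
    obtain ⟨⟨⟨hx, hy⟩, hadj⟩, hfst⟩ := hp
    subst hfst
    exact ⟨hy, hadj⟩
  · rintro ⟨x, y⟩ hp ⟨x', y'⟩ hp' h
    simp only [Finset.mem_coe, Finset.mem_filter, Finset.mem_product] at hp hp'
    obtain ⟨_, h1⟩ := hp; obtain ⟨_, h2⟩ := hp'
    simp_all [Prod.ext_iff]
  · intro y hy
    simp only [Finset.coe_filter, Set.mem_setOf_eq, Finset.mem_coe] at hy ⊢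
    exact ⟨(u, y), by simp [Finset.mem_filter, Finset.mem_product, hu, hy.1, hy.2], rfl⟩

end Aux

set_option maxHeartbeats 1600000

/-- If `n ≡ r − 1 (mod r)` where `r = χ(G)` and
`es_χ(G) = ⌊n/r⌋·⌊n/r + 1⌋`, then in every proper coloring of `G` with exactly `r`
color classes ordered by nondecreasing size, every `v ∈ C_i` sends at least
`⌊n/r⌋` edges to each other class `C_j`. -/
theorem extremal_coloring_degree_bound {V : Type*} [Fintype V] (G : SimpleGraph V)
    (r : ℕ) (hchi : G.chromaticNumber = r)
    (hmod : Fintype.card V % r = r - 1)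
    (hes : esChi G = (Fintype.card V / r) * (Fintype.card V / r + 1)) :
    ∀ c : G.Coloring (Fin r), Surjective c →
      (∀ i j : Fin r, i ≤ j → (classOf c i).card ≤ (classOf c j).card) →
      ∀ (i : Fin r) (v : V), v ∈ classOf c i → ∀ j : Fin r, j ≠ i →
        Fintype.card V / r ≤ eCC G {v} (classOf c j) := by
  classical
  intro c hsurj hsort i v hv j hji
  by_cases hr2 : r ≤ 1
  · exact absurd (Fin.ext (by have := i.isLt; have := j.isLt; omega : (j : ℕ) = i)) hji
  push_neg at hr2
  haveI : NeZero r := ⟨by omega⟩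
  set q := Fintype.card V / r with hqdef
  have hn : r * q + (r - 1) = Fintype.card V := by
    rw [← hmod]; exact Nat.div_add_mod _ r
  have hnr : r ≤ Fintype.card V := by
    have := Fintype.card_le_of_surjective (⇑c) hsurj
    simpa using this
  have hq1 : 1 ≤ q := by
    rcases Nat.eq_zero_or_pos q with h | h
    · rw [h] at hn; simp at hn; omega
    · exact h
  -- key upper bound: merging class 0 into class k
  have hA : ∀ k : Fin r, k ≠ 0 → q * (q + 1) ≤ eCC G (classOf c 0) (classOf c k) := by
    intro k hk
    rw [← hes]
    have key := esChi_le_of_recolor G r hchi (fun u => if c u = 0 then k else c u) 0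
      (by intro u; by_cases h : c u = 0 <;> simp [h, hk])
      ((classOf c 0 ×ˢ classOf c k).filter fun p => G.Adj p.1 p.2)
      (fun p hp => (Finset.mem_filter.1 hp).2)
      (by
        intro u w hadj hf
        have hcc : c u ≠ c w := c.valid hadj
        by_cases h1 : c u = 0 <;> by_cases h2 : c w = 0
        · exact absurd (h1.trans h2.symm) hcc
        · -- c u = 0, c w = k
          rw [if_pos h1, if_neg h2] at hf
          refine Finset.mem_image.2 ⟨(u, w), ?_, rfl⟩
          rw [Finset.mem_filter, Finset.mem_product, mem_classOf, mem_classOf]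
          exact ⟨⟨h1, hf.symm⟩, hadj⟩
        · -- c w = 0, c u = k
          rw [if_neg h1, if_pos h2] at hf
          rw [Sym2.eq_swap]
          refine Finset.mem_image.2 ⟨(w, u), ?_, rfl⟩
          rw [Finset.mem_filter, Finset.mem_product, mem_classOf, mem_classOf]
          exact ⟨⟨h2, hf⟩, hadj.symm⟩
        · rw [if_neg h1, if_neg h2] at hf
          exact absurd hf hcc)
    calc esChi G ≤ _ := key
      _ = eCC G (classOf c 0) (classOf c k) := by
        rw [eCC]
  have ha0le : ∀ k : Fin r, (classOf c 0).card ≤ (classOf c k).card :=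
    fun k => hsort 0 k (by rw [Fin.le_def]; simp)
  have hsum : ∑ k, (classOf c k).card = Fintype.card V := sum_card_classOf c
  -- a 0 ≤ q
  have ha0q : (classOf c 0).card ≤ q := by
    have h1 : r * (classOf c 0).card ≤ Fintype.card V := by
      rw [← hsum]
      calc r * (classOf c 0).card = ∑ _k : Fin r, (classOf c 0).card := by
            simp [Finset.sum_const, mul_comm]
        _ ≤ ∑ k, (classOf c k).card := Finset.sum_le_sum fun k _ => ha0le k
    rw [hqdef]
    exact Nat.le_div_iff_mul_le (by omega) |>.2 (by rw [mul_comm]; exact h1)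
  -- each other class has size ≥ q+1
  have hak_lb : ∀ k : Fin r, k ≠ 0 → q + 1 ≤ (classOf c k).card := by
    intro k hk
    have h1 : q * (q + 1) ≤ (classOf c 0).card * (classOf c k).card :=
      le_trans (hA k hk) (eCC_le_mul _ _)
    have h2 : (classOf c 0).card * (classOf c k).card ≤ q * (classOf c k).card :=
      Nat.mul_le_mul_right _ ha0q
    exact Nat.le_of_mul_le_mul_left (le_trans h1 h2) (by omega)
  -- pairwise sum upper bound: a 0 + a k ≤ 2q+1 for k ≠ 0
  obtain ⟨r2, hr2eq⟩ : ∃ r2, r = r2 + 2 := ⟨r - 2, by omega⟩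
  have hsum_ub : ∀ k : Fin r, k ≠ 0 → (classOf c 0).card + (classOf c k).card ≤ 2 * q + 1 := by
    intro k hk
    have hk_mem : k ∈ Finset.univ.erase (0 : Fin r) := Finset.mem_erase.2 ⟨hk, Finset.mem_univ _⟩
    have hsplit1 : (classOf c 0).card + ∑ x ∈ Finset.univ.erase 0, (classOf c x).card
        = Fintype.card V := by
      have h := Finset.add_sum_erase Finset.univ (fun x => (classOf c x).card)
        (Finset.mem_univ (0 : Fin r))
      rw [hsum] at h
      exact h
    have hsplit2 : (classOf c k).card + ∑ x ∈ (Finset.univ.erase 0).erase k, (classOf c x).card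
        = ∑ x ∈ Finset.univ.erase 0, (classOf c x).card :=
      Finset.add_sum_erase (Finset.univ.erase 0) (fun x => (classOf c x).card) hk_mem
    have hrest : ((Finset.univ.erase (0 : Fin r)).erase k).card • (q + 1)
        ≤ ∑ x ∈ (Finset.univ.erase 0).erase k, (classOf c x).card := by
      refine Finset.card_nsmul_le_sum _ _ _ fun x hx => ?_
      exact hak_lb x (Finset.mem_erase.1 (Finset.mem_erase.1 hx).2).1
    have hcard : ((Finset.univ.erase (0 : Fin r)).erase k).card = r2 := by
      rw [Finset.card_erase_of_mem hk_mem,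
        Finset.card_erase_of_mem (Finset.mem_univ _)]
      simp [hr2eq]
    rw [hcard, smul_eq_mul] at hrest
    have hnval : Fintype.card V = q * (r2 + 2) + (r2 + 1) := by
      rw [← hn, hr2eq, show r2 + 2 - 1 = r2 + 1 by omega]; ring
    nlinarith [hsplit1, hsplit2, hrest]
  -- a 0 = q
  have ha0 : (classOf c 0).card = q := by
    set a0 := (classOf c 0).card with ha0def
    by_contra hne
    have ha0lt2 : a0 + 1 ≤ q := by omega
    set K1 : Fin r := ⟨1, by omega⟩ with hK1
    have hK1ne : K1 ≠ 0 := by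
      intro h
      have := congrArg Fin.val h
      simp [hK1] at this
    have h1 : q * (q + 1) ≤ a0 * (classOf c K1).card :=
      le_trans (hA K1 hK1ne) (eCC_le_mul _ _)
    have h2 : a0 + (classOf c K1).card ≤ 2 * q + 1 := hsum_ub K1 hK1ne
    have hb : q + 1 ≤ (classOf c K1).card := hak_lb K1 hK1ne
    have ha01 : 1 ≤ a0 := by
      obtain ⟨u, hu⟩ := hsurj 0
      exact Finset.card_pos.2 ⟨u, (mem_classOf c 0 u).2 hu⟩
    nlinarith [h1, h2, hb, ha0lt2, ha01, hq1]
  -- all other classes have size exactly q+1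
  have hak : ∀ k : Fin r, k ≠ 0 → (classOf c k).card = q + 1 := by
    intro k hk
    have := hsum_ub k hk
    have := hak_lb k hk
    omega
  -- completeness between class 0 and every other class
  have hcomp : ∀ k : Fin r, k ≠ 0 → ∀ u ∈ classOf c 0, ∀ w ∈ classOf c k, G.Adj u w := by
    intro k hk u hu w hw
    have hsum_e : q * (q + 1) ≤ ∑ x ∈ classOf c 0, ((classOf c k).filter fun y => G.Adj x y).card := by
      rw [← eCC_eq_sum]; exact hA k hk
    have hrest : ∑ x ∈ (classOf c 0).erase u, ((classOf c k).filter fun y => G.Adj x y).card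
        ≤ (q - 1) * (q + 1) := by
      have := Finset.sum_le_card_nsmul ((classOf c 0).erase u)
        (fun x => ((classOf c k).filter fun y => G.Adj x y).card) (q + 1)
        (fun x _ => by
          calc ((classOf c k).filter fun y => G.Adj x y).card
              ≤ (classOf c k).card := Finset.card_filter_le _ _
            _ = q + 1 := hak k hk)
      rwa [Finset.card_erase_of_mem hu, ha0, smul_eq_mul] at this
    have hsplit : ((classOf c k).filter fun y => G.Adj u y).card
        + ∑ x ∈ (classOf c 0).erase u, ((classOf c k).filter fun y => G.Adj x y).card
        = ∑ x ∈ classOf c 0, ((classOf c k).filter fun y => G.Adj x y).card :=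
      Finset.add_sum_erase (classOf c 0)
        (fun x => ((classOf c k).filter fun y => G.Adj x y).card) hu
    have hge : q + 1 ≤ ((classOf c k).filter fun y => G.Adj u y).card := by
      zify [hq1] at hsum_e hrest hsplit ⊢
      nlinarith [hsum_e, hrest, hsplit, hq1]
    have heq : (classOf c k).filter (fun y => G.Adj u y) = classOf c k := by
      refine Finset.eq_of_subset_of_card_le (Finset.filter_subset _ _) ?_
      rw [hak k hk]; exact hge
    have := heq ▸ hw
    exact (Finset.mem_filter.1 this).2
  -- now the three cases
  rw [eCC_singleton]
  have hvi : c v = i := (mem_classOf c i v).1 hv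
  by_cases hi0 : i = 0
  · -- v in class 0, j ≠ 0
    have hj0 : j ≠ 0 := hi0 ▸ hji
    have : (classOf c j).filter (fun w => G.Adj v w) = classOf c j :=
      Finset.filter_eq_self.2 fun w hw => hcomp j hj0 v (hi0 ▸ hv) w hw
    rw [this, hak j hj0]
    omega
  by_cases hj0 : j = 0
  · -- j = 0, i ≠ 0: every vertex of class 0 is adjacent to v
    subst hj0
    have : (classOf c 0).filter (fun w => G.Adj v w) = classOf c 0 :=
      Finset.filter_eq_self.2 fun w hw => (hcomp i hi0 w hw v hv).symm
    rw [this, ha0]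
  · -- i ≠ 0, j ≠ 0, j ≠ i : contradiction argument
    by_contra hlt
    push_neg at hlt
    rw [← eCC_singleton] at hlt
    have hlt' : eCC G {v} (classOf c j) ≤ q - 1 := by omega
    set P : Finset (V × V) :=
      ((({v} : Finset V) ×ˢ classOf c j).filter fun p => G.Adj p.1 p.2)
      ∪ ((((classOf c i).erase v) ×ˢ classOf c 0).filter fun p => G.Adj p.1 p.2) with hPdef
    have key := esChi_le_of_recolor G r hchi
      (fun u => if u = v then j else if c u = i then 0 else c u) i
      (by
        intro u
        by_cases h1 : u = v
        · simpa [h1] using hji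
        · by_cases h2 : c u = i <;> simp [h1, h2, Ne.symm hi0])
      P
      (by
        intro p hp
        rcases Finset.mem_union.1 hp with h | h
        · exact (Finset.mem_filter.1 h).2
        · exact (Finset.mem_filter.1 h).2)
      (by
        intro u w hadj hf
        have hcc : c u ≠ c w := c.valid hadj
        by_cases hu : u = v <;> by_cases hw : w = v
        · exact absurd (hu.trans hw.symm) hadj.ne
        · -- u = v
          rw [if_pos hu, if_neg hw] at hf
          by_cases h2 : c w = i
          · rw [if_pos h2] at hf; exact absurd hf hj0
          · rw [if_neg h2] at hf
            rw [show Sym2.mk u w = Sym2.mk v w by rw [hu]]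
            refine Finset.mem_image.2 ⟨(v, w), Finset.mem_union_left _ ?_, rfl⟩
            rw [Finset.mem_filter, Finset.mem_product, Finset.mem_singleton, mem_classOf]
            exact ⟨⟨rfl, hf.symm⟩, hu ▸ hadj⟩
        · -- w = v
          rw [if_pos hw, if_neg hu] at hf
          by_cases h2 : c u = i
          · rw [if_pos h2] at hf; exact absurd hf.symm hj0
          · rw [if_neg h2] at hf
            rw [show Sym2.mk u w = Sym2.mk v u by rw [hw, Sym2.eq_swap]]
            refine Finset.mem_image.2 ⟨(v, u), Finset.mem_union_left _ ?_, rfl⟩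
            rw [Finset.mem_filter, Finset.mem_product, Finset.mem_singleton, mem_classOf]
            exact ⟨⟨rfl, hf⟩, (hw ▸ hadj).symm⟩
        · -- u ≠ v, w ≠ v
          rw [if_neg hu, if_neg hw] at hf
          by_cases h1 : c u = i <;> by_cases h2 : c w = i
          · exact absurd (h1.trans h2.symm) hcc
          · rw [if_pos h1, if_neg h2] at hf
            refine Finset.mem_image.2 ⟨(u, w), Finset.mem_union_right _ ?_, rfl⟩
            rw [Finset.mem_filter, Finset.mem_product, Finset.mem_erase, mem_classOf,
              mem_classOf]
            exact ⟨⟨⟨hu, h1⟩, hf.symm⟩, hadj⟩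
          · rw [if_neg h1, if_pos h2] at hf
            rw [Sym2.eq_swap]
            refine Finset.mem_image.2 ⟨(w, u), Finset.mem_union_right _ ?_, rfl⟩
            rw [Finset.mem_filter, Finset.mem_product, Finset.mem_erase, mem_classOf,
              mem_classOf]
            exact ⟨⟨⟨hw, h2⟩, hf⟩, hadj.symm⟩
          · rw [if_neg h1, if_neg h2] at hf
            exact absurd hf hcc)
    have hcard1 : ((({v} : Finset V) ×ˢ classOf c j).filter fun p => G.Adj p.1 p.2).card
        = eCC G {v} (classOf c j) := by rw [eCC]
    have hcard2 : ((((classOf c i).erase v) ×ˢ classOf c 0).filter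
        fun p => G.Adj p.1 p.2).card ≤ q * q := by
      calc _ ≤ (((classOf c i).erase v) ×ˢ classOf c 0).card := Finset.card_filter_le _ _
        _ = ((classOf c i).erase v).card * (classOf c 0).card := Finset.card_product _ _
        _ = q * q := by
            rw [Finset.card_erase_of_mem hv, hak i hi0, ha0]
            simp
    have hPcard : P.card ≤ (q - 1) + q * q := by
      calc P.card ≤ _ + _ := Finset.card_union_le _ _
        _ ≤ (q - 1) + q * q := by
            rw [hcard1]
            exact Nat.add_le_add hlt' hcard2
    have hfinal : q * (q + 1) ≤ (q - 1) + q * q := by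
      rw [← hes]
      exact le_trans key hPcard
    have contra : ∀ m : ℕ, 1 ≤ m → ¬ (m * (m + 1) ≤ (m - 1) + m * m) := by
      intro m hm h
      obtain ⟨m0, rfl⟩ : ∃ m0, m = m0 + 1 := ⟨m - 1, by omega⟩
      simp only [Nat.add_sub_cancel] at h
      nlinarith [h]
    exact contra q hq1 hfinal
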